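/- Let k be a field of characteristic p ≥ 3, let r ≥ 1, let f(T) = Σ_{i=1}^t a_i T^{p^i} ∈ k[T] be a nonzero inseparable p-polynomial, and let η ∈ k with η ≠ 0. Let R be the quotient of k[u_0, …, u_r, v] by the ideal generated by u_0^p, …, u_{r−1}^p, u_r^p + v², and f(u_r) + η·u_0, and let S be the quotient of k[u_0, …, u_{r−1}, v] by the ideal generated by u_0^p, …, u_{r−2}^p, u_{r−1}^p + v², and (f(u_{r−1}))^p. Then there is a k-algebra isomorphism φ: R → S determined by φ(v) = v, φ(u_i) = u_{i−1} for 1 ≤ i ≤ r, and φ(u_0) = −η^{−1}·f(u_{r−1}). -/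

import Mathlib

open MvPolynomial

set_option maxHeartbeats 1000000 in
set_option synthInstance.maxHeartbeats 400000 in
/-- For `η ≠ 0` there is a `k`-algebra isomorphism `kM_{r+1;f,η} ≅ kM_{r;f^p}`, given by
`v ↦ v`, `u_i ↦ u_{i−1}` for `1 ≤ i ≤ r`, and `u_0 ↦ −η⁻¹·f(u_{r−1})`.
Here `R = k[u_0, …, u_r, v]/(u_0^p, …, u_{r−1}^p, u_r^p + v², f(u_r) + η·u_0)` (variables
`X ⟨0⟩, …, X ⟨r⟩, X ⟨r+1⟩ = v` of `MvPolynomial (Fin (r+2)) k`) and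
`S = k[u_0, …, u_{r−1}, v]/(u_0^p, …, u_{r−2}^p, u_{r−1}^p + v², f(u_{r−1})^p)` (variables
`X ⟨0⟩, …, X ⟨r−1⟩, X ⟨r⟩ = v` of `MvPolynomial (Fin (r+1)) k`). -/
theorem statement5 {k : Type} [Field k] (p : ℕ) (hp : Nat.Prime p) (hp3 : 3 ≤ p)
    (hchar : CharP k p) (r t : ℕ) (hr : 1 ≤ r) (ht : 1 ≤ t)
    (a : ℕ → k) (hf : ∃ i ∈ Finset.Icc 1 t, a i ≠ 0) (η : k) (hη : η ≠ 0)
    (IR : Ideal (MvPolynomial (Fin (r + 2)) k))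
    (hIR : IR = Ideal.span
      ({q | ∃ ℓ : ℕ, ∃ _ : ℓ < r, q = X (⟨ℓ, by omega⟩ : Fin (r + 2)) ^ p} ∪
        {X (⟨r, by omega⟩ : Fin (r + 2)) ^ p + X (⟨r + 1, by omega⟩ : Fin (r + 2)) ^ 2,
          (∑ i ∈ Finset.Icc 1 t, C (a i) * X (⟨r, by omega⟩ : Fin (r + 2)) ^ p ^ i) +
            C η * X (⟨0, by omega⟩ : Fin (r + 2))}))
    (IS : Ideal (MvPolynomial (Fin (r + 1)) k))
    (hIS : IS = Ideal.span
      ({q | ∃ ℓ : ℕ, ∃ _ : ℓ + 2 ≤ r, q = X (⟨ℓ, by omega⟩ : Fin (r + 1)) ^ p} ∪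
        {X (⟨r - 1, by omega⟩ : Fin (r + 1)) ^ p + X (⟨r, by omega⟩ : Fin (r + 1)) ^ 2,
          (∑ i ∈ Finset.Icc 1 t, C (a i) * X (⟨r - 1, by omega⟩ : Fin (r + 1)) ^ p ^ i) ^ p})) :
    ∃ φ : (MvPolynomial (Fin (r + 2)) k ⧸ IR) ≃ₐ[k] (MvPolynomial (Fin (r + 1)) k ⧸ IS),
      φ (Ideal.Quotient.mk IR (X (⟨r + 1, by omega⟩ : Fin (r + 2)))) =
        Ideal.Quotient.mk IS (X (⟨r, by omega⟩ : Fin (r + 1))) ∧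
      (∀ i : ℕ, ∀ _ : 1 ≤ i, ∀ _ : i ≤ r,
        φ (Ideal.Quotient.mk IR (X (⟨i, by omega⟩ : Fin (r + 2)))) =
          Ideal.Quotient.mk IS (X (⟨i - 1, by omega⟩ : Fin (r + 1)))) ∧
      φ (Ideal.Quotient.mk IR (X (⟨0, by omega⟩ : Fin (r + 2)))) =
        Ideal.Quotient.mk IS (C (-η⁻¹) *
          (∑ i ∈ Finset.Icc 1 t, C (a i) * X (⟨r - 1, by omega⟩ : Fin (r + 1)) ^ p ^ i)) := by
  classical
  haveI : Fact p.Prime := ⟨hp⟩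
  have hpne : p ≠ 0 := hp.ne_zero
  set fR : MvPolynomial (Fin (r + 2)) k :=
    ∑ i ∈ Finset.Icc 1 t, C (a i) * X (⟨r, by omega⟩ : Fin (r + 2)) ^ p ^ i with hfR
  set fS : MvPolynomial (Fin (r + 1)) k :=
    ∑ i ∈ Finset.Icc 1 t, C (a i) * X (⟨r - 1, by omega⟩ : Fin (r + 1)) ^ p ^ i with hfS
  -- membership of generators
  have hmemR1 : ∀ (ℓ : ℕ) (_h : ℓ < r), (X (⟨ℓ, by omega⟩ : Fin (r + 2))) ^ p ∈ IR := by
    intro ℓ h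
    rw [hIR]
    exact Ideal.subset_span (Or.inl ⟨ℓ, h, rfl⟩)
  have hmemR2 : X (⟨r, by omega⟩ : Fin (r + 2)) ^ p + X (⟨r + 1, by omega⟩ : Fin (r + 2)) ^ 2 ∈ IR := by
    rw [hIR]; exact Ideal.subset_span (Or.inr (Set.mem_insert _ _))
  have hmemR3 : fR + C η * X (⟨0, by omega⟩ : Fin (r + 2)) ∈ IR := by
    rw [hIR]; exact Ideal.subset_span (Or.inr (Set.mem_insert_iff.mpr (Or.inr rfl)))
  have hmemS1 : ∀ (ℓ : ℕ) (_h : ℓ + 2 ≤ r), (X (⟨ℓ, by omega⟩ : Fin (r + 1))) ^ p ∈ IS := by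
    intro ℓ h
    rw [hIS]
    exact Ideal.subset_span (Or.inl ⟨ℓ, h, rfl⟩)
  have hmemS2 : X (⟨r - 1, by omega⟩ : Fin (r + 1)) ^ p + X (⟨r, by omega⟩ : Fin (r + 1)) ^ 2 ∈ IS := by
    rw [hIS]; exact Ideal.subset_span (Or.inr (Set.mem_insert _ _))
  have hmemS3 : fS ^ p ∈ IS := by
    rw [hIS]; exact Ideal.subset_span (Or.inr (Set.mem_insert_iff.mpr (Or.inr rfl)))
  have hmemR3' : fR ^ p ∈ IR := by
    have h1 : (fR + C η * X (⟨0, by omega⟩ : Fin (r + 2))) ^ p ∈ IR :=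
      Ideal.pow_mem_of_mem _ hmemR3 p (by omega)
    have hadd : (fR + C η * X (⟨0, by omega⟩ : Fin (r + 2))) ^ p
        = fR ^ p + (C η) ^ p * (X (⟨0, by omega⟩ : Fin (r + 2))) ^ p := by
      rw [add_pow_char, mul_pow]
    have h2 : (C η : MvPolynomial (Fin (r + 2)) k) ^ p * (X (⟨0, by omega⟩ : Fin (r + 2))) ^ p ∈ IR :=
      Ideal.mul_mem_left _ _ (hmemR1 0 (by omega))
    have := Ideal.sub_mem _ h1 h2
    rwa [hadd, add_sub_cancel_right] at this
  -- the maps on variables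
  set gvals : Fin (r + 2) → MvPolynomial (Fin (r + 1)) k ⧸ IS := fun j =>
    if h : (j : ℕ) = 0 then Ideal.Quotient.mk IS (C (-η⁻¹) * fS)
    else Ideal.Quotient.mk IS (X (⟨(j : ℕ) - 1, by omega⟩ : Fin (r + 1))) with hgvals
  set hvals : Fin (r + 1) → MvPolynomial (Fin (r + 2)) k ⧸ IR := fun j =>
    Ideal.Quotient.mk IR (X (⟨(j : ℕ) + 1, by omega⟩ : Fin (r + 2))) with hhvals
  have hg0 : gvals ⟨0, by omega⟩ = Ideal.Quotient.mk IS (C (-η⁻¹) * fS) := by simp [hgvals]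
  have hg : ∀ j : ℕ, ∀ hj : j < r + 2, 1 ≤ j →
      gvals ⟨j, hj⟩ = Ideal.Quotient.mk IS (X (⟨j - 1, by omega⟩ : Fin (r + 1))) := by
    intro j hj h1
    simp only [hgvals]
    rw [dif_neg (by omega)]
  have hCmkS : ∀ c : k, algebraMap k (MvPolynomial (Fin (r + 1)) k ⧸ IS) c
      = Ideal.Quotient.mk IS (C c) := fun c => rfl
  have hCmkR : ∀ c : k, algebraMap k (MvPolynomial (Fin (r + 2)) k ⧸ IR) c
      = Ideal.Quotient.mk IR (C c) := fun c => rfl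
  -- key evaluations
  have hafR : aeval gvals fR = Ideal.Quotient.mk IS fS := by
    rw [hfR, hfS, map_sum, map_sum]
    refine Finset.sum_congr rfl fun i hi => ?_
    rw [map_mul, map_pow, aeval_X, aeval_C, hg r (by omega) hr, map_mul, map_pow, hCmkS]
  have hahfS : aeval hvals fS = Ideal.Quotient.mk IR fR := by
    rw [hfR, hfS, map_sum, map_sum]
    refine Finset.sum_congr rfl fun i hi => ?_
    rw [map_mul, map_pow, aeval_X, aeval_C, hhvals]
    simp only
    have h1 : (⟨r - 1 + 1, by omega⟩ : Fin (r + 2)) = ⟨r, by omega⟩ := by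
      ext; simp; omega
    rw [h1, map_mul, map_pow, hCmkR]
  -- F kills IR
  have hF : ∀ q ∈ IR, aeval gvals q = 0 := by
    have hle : IR ≤ RingHom.ker (aeval gvals : MvPolynomial (Fin (r + 2)) k →ₐ[k] _) := by
      rw [hIR, Ideal.span_le]
      rintro q hq
      simp only [Set.mem_union, Set.mem_setOf_eq, Set.mem_insert_iff,
        Set.mem_singleton_iff] at hq
      rw [SetLike.mem_coe, RingHom.mem_ker]
      obtain ⟨ℓ, hℓ, rfl⟩ | rfl | rfl := hq
      · rw [map_pow, aeval_X]
        rcases Nat.eq_zero_or_pos ℓ with h0 | h1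
        · subst h0
          rw [hg0, ← map_pow, Ideal.Quotient.eq_zero_iff_mem, mul_pow]
          exact Ideal.mul_mem_left _ _ hmemS3
        · rw [hg ℓ (by omega) h1, ← map_pow, Ideal.Quotient.eq_zero_iff_mem]
          exact hmemS1 (ℓ - 1) (by omega)
      · rw [map_add, map_pow, map_pow, aeval_X, aeval_X, hg r (by omega) hr,
          hg (r + 1) (by omega) (by omega), ← map_pow, ← map_pow, ← map_add,
          Ideal.Quotient.eq_zero_iff_mem]
        have h2 : r + 1 - 1 = r := by omega
        simp only [h2]
        exact hmemS2
      · rw [map_add, hafR, map_mul, aeval_X, aeval_C, hg0, hCmkS, ← map_mul, ← map_add,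
          Ideal.Quotient.eq_zero_iff_mem]
        have h3 : fS + C η * (C (-η⁻¹) * fS) = 0 := by
          rw [← mul_assoc, ← C_mul]
          have h4 : η * -η⁻¹ = -1 := by field_simp
          rw [h4]
          simp
        rw [h3]
        exact Ideal.zero_mem _
    exact fun q hq => hle hq
  -- G kills IS
  have hG : ∀ q ∈ IS, aeval hvals q = 0 := by
    have hle : IS ≤ RingHom.ker (aeval hvals : MvPolynomial (Fin (r + 1)) k →ₐ[k] _) := by
      rw [hIS, Ideal.span_le]
      rintro q hq
      simp only [Set.mem_union, Set.mem_setOf_eq, Set.mem_insert_iff,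
        Set.mem_singleton_iff] at hq
      rw [SetLike.mem_coe, RingHom.mem_ker]
      obtain ⟨ℓ, hℓ, rfl⟩ | rfl | rfl := hq
      · rw [map_pow, aeval_X, hhvals]
        simp only
        rw [← map_pow, Ideal.Quotient.eq_zero_iff_mem]
        exact hmemR1 (ℓ + 1) (by omega)
      · rw [map_add, map_pow, map_pow, aeval_X, aeval_X, hhvals]
        simp only
        have h1 : (⟨r - 1 + 1, by omega⟩ : Fin (r + 2)) = ⟨r, by omega⟩ := by
          ext; simp; omega
        rw [h1, ← map_pow, ← map_pow, ← map_add, Ideal.Quotient.eq_zero_iff_mem]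
        exact hmemR2
      · rw [map_pow, hahfS, ← map_pow, Ideal.Quotient.eq_zero_iff_mem]
        exact hmemR3'
    exact fun q hq => hle hq
  -- induced maps
  set F : (MvPolynomial (Fin (r + 2)) k ⧸ IR) →ₐ[k] (MvPolynomial (Fin (r + 1)) k ⧸ IS) :=
    Ideal.Quotient.liftₐ IR (aeval gvals) hF with hFdef
  set G : (MvPolynomial (Fin (r + 1)) k ⧸ IS) →ₐ[k] (MvPolynomial (Fin (r + 2)) k ⧸ IR) :=
    Ideal.Quotient.liftₐ IS (aeval hvals) hG with hGdef
  have hFmk : ∀ q, F (Ideal.Quotient.mk IR q) = aeval gvals q := fun q => by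
    rw [hFdef, Ideal.Quotient.liftₐ_apply]
    rfl
  have hGmk : ∀ q, G (Ideal.Quotient.mk IS q) = aeval hvals q := fun q => by
    rw [hGdef, Ideal.Quotient.liftₐ_apply]
    rfl
  -- compositions
  have hGF : G.comp F = AlgHom.id k _ := by
    apply Ideal.Quotient.algHom_ext
    apply MvPolynomial.algHom_ext
    intro j
    simp only [AlgHom.comp_apply, Ideal.Quotient.mkₐ_eq_mk, AlgHom.id_apply]
    rw [hFmk, aeval_X]
    rcases Nat.eq_zero_or_pos (j : ℕ) with h0 | h1
    · have hj : j = ⟨0, by omega⟩ := by ext; simpa using h0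
      rw [hj, hg0, hGmk, map_mul, hahfS, aeval_C, hCmkR, ← map_mul, Ideal.Quotient.eq]
      have h5 : C (-η⁻¹) * fR - X (⟨0, by omega⟩ : Fin (r + 2))
          = C (-η⁻¹) * (fR + C η * X (⟨0, by omega⟩ : Fin (r + 2))) := by
        rw [mul_add, ← mul_assoc, ← C_mul]
        have h6 : -η⁻¹ * η = -1 := by field_simp
        have h7 : (C (-1) : MvPolynomial (Fin (r + 2)) k) = -1 := by simp
        rw [h6, h7]
        ring
      rw [h5]
      exact Ideal.mul_mem_left _ _ hmemR3
    · have hj : j = ⟨(j : ℕ), j.isLt⟩ := rfl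
      rw [hj, hg (j : ℕ) j.isLt h1, hGmk, aeval_X, hhvals]
      simp only
      have hjj : (⟨(j : ℕ) - 1 + 1, by omega⟩ : Fin (r + 2)) = ⟨(j : ℕ), j.isLt⟩ :=
        Fin.ext (by simp; omega)
      rw [hjj]
  have hFG : F.comp G = AlgHom.id k _ := by
    apply Ideal.Quotient.algHom_ext
    apply MvPolynomial.algHom_ext
    intro j
    simp only [AlgHom.comp_apply, Ideal.Quotient.mkₐ_eq_mk, AlgHom.id_apply]
    rw [hGmk, aeval_X, hhvals]
    simp only
    rw [hFmk, aeval_X, hg ((j : ℕ) + 1) (by omega) (by omega)]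
    have hjj : (⟨(j : ℕ) + 1 - 1, by omega⟩ : Fin (r + 1)) = j := Fin.ext (by simp)
    rw [hjj]
  refine ⟨AlgEquiv.ofAlgHom F G hFG hGF, ?_, ?_, ?_⟩
  · show F (Ideal.Quotient.mk IR _) = _
    rw [hFmk, aeval_X, hg (r + 1) (by omega) (by omega)]
    have hjj : (⟨r + 1 - 1, by omega⟩ : Fin (r + 1)) = ⟨r, by omega⟩ := Fin.ext (by simp)
    rw [hjj]
  · intro i h1 h2
    show F (Ideal.Quotient.mk IR _) = _
    rw [hFmk, aeval_X, hg i (by omega) h1]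
  · show F (Ideal.Quotient.mk IR _) = _
    rw [hFmk, aeval_X, hg0, hfS]
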